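/- Let q be a self-join-free Boolean conjunctive query (no relation name occurs in two distinct atoms of q) and let q^sj be a self-join variation of q, i.e., a query obtained from q by replacing some atoms S_i(v̄) with atoms R_i(v̄), where each relation name R_i occurs elsewhere in q. Assume q^sj is minimal. Then for every database D with D ⊨ q there exists a database D' with D' ⊨ q^sj such that for every integer k, (q, D) has a contingency set of size at most k if and only if (q^sj, D') has a contingency set of size at most k. -/

import Mathlib

/-!
STATEMENT 6.
`q` is a self-join-free Boolean CQ (atoms indexed by the finite type `ι`,
`rel` injective), with variables from `ℕ`.  `q^sj` is a self-join variation: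
it has the same atoms' argument lists, and each atom's relation name is either
unchanged or replaced by a relation name occurring in another atom of `q`.
`q^sj` is minimal: no CQ (over the same vocabulary) with strictly fewer atoms
is logically equivalent to it.  Then for every database `D ⊨ q` there is a
database `D' ⊨ q^sj` such that for all `k`, `(q, D)` has a contingency set of
size ≤ k iff `(q^sj, D')` does.
-/
theorem stmt_6 {Rn : Type} (ar : Rn → ℕ)
    {ι : Type} [Fintype ι]
    (rel rel' : ι → Rn) (args : ι → List ℕ)
    (hlen : ∀ i, (args i).length = ar (rel i))
    (hlen' : ∀ i, (args i).length = ar (rel' i))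
    (hsjfree : Function.Injective rel)
    (hvariation : ∀ i, rel' i = rel i ∨ ∃ j, j ≠ i ∧ rel' i = rel j)
    (hmin : ¬ ∃ (n' : ℕ) (rel'' : Fin n' → Rn) (args'' : Fin n' → List ℕ),
      n' < Fintype.card ι ∧ (∀ i, (args'' i).length = ar (rel'' i)) ∧
      (∀ (β : Type) (D : Finset (Rn × List β)),
        (∃ σ : ℕ → β, ∀ i, (rel' i, (args i).map σ) ∈ D) ↔
        (∃ σ : ℕ → β, ∀ i, (rel'' i, (args'' i).map σ) ∈ D)))
    {α : Type} (D : Finset (Rn × List α))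
    (hD : ∀ t ∈ D, t.2.length = ar t.1)
    (hsat : ∃ σ : ℕ → α, ∀ i, (rel i, (args i).map σ) ∈ D) :
    ∃ (β : Type) (D' : Finset (Rn × List β)),
      (∀ t ∈ D', t.2.length = ar t.1) ∧
      (∃ σ : ℕ → β, ∀ i, (rel' i, (args i).map σ) ∈ D') ∧
      ∀ k : ℕ,
        (∃ Γ : Finset (Rn × List α), Γ ⊆ D ∧ Γ.card ≤ k ∧
          ¬ ∃ σ : ℕ → α, ∀ i,
            (rel i, (args i).map σ) ∈ D ∧ (rel i, (args i).map σ) ∉ Γ) ↔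
        (∃ Γ : Finset (Rn × List β), Γ ⊆ D' ∧ Γ.card ≤ k ∧
          ¬ ∃ σ : ℕ → β, ∀ i,
            (rel' i, (args i).map σ) ∈ D' ∧ (rel' i, (args i).map σ) ∉ Γ) := by
  classical
  -- lengths of argument lists agree when relation names agree under rel'
  have hlen2 : ∀ i i', rel' i = rel' i' → (args i).length = (args i').length := by
    intro i i' h
    rw [hlen' i, hlen' i', h]
  -- ** CARD : any "h-endomorphism" image of the atom set has full cardinality **
  have CARD : ∀ (j : ι → ι) (h : ℕ → ℕ),
      (∀ i, rel' (j i) = rel' i ∧ (args i).map h = args (j i)) →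
      Fintype.card ι ≤ (Finset.univ.image fun i => (rel' (j i), args (j i))).card := by
    intro j h hjh
    by_contra hc
    push_neg at hc
    set T : Finset (Rn × List ℕ) := Finset.univ.image fun i => (rel' (j i), args (j i)) with hT
    apply hmin
    refine ⟨T.card, fun k => ((T.equivFin.symm k : T) : Rn × List ℕ).1,
      fun k => ((T.equivFin.symm k : T) : Rn × List ℕ).2, hc, ?_, ?_⟩
    · intro k
      set a : Rn × List ℕ := ((T.equivFin.symm k : T) : Rn × List ℕ) with ha
      have hm : a ∈ T := (T.equivFin.symm k).2
      rw [hT, Finset.mem_image] at hm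
      obtain ⟨i, -, hi⟩ := hm
      show a.2.length = ar a.1
      rw [← hi]
      exact hlen' (j i)
    · intro β Dd
      constructor
      · rintro ⟨σ, hσ⟩
        refine ⟨σ, fun k => ?_⟩
        set a : Rn × List ℕ := ((T.equivFin.symm k : T) : Rn × List ℕ) with ha
        have hm : a ∈ T := (T.equivFin.symm k).2
        rw [hT, Finset.mem_image] at hm
        obtain ⟨i, -, hi⟩ := hm
        show (a.1, List.map σ a.2) ∈ Dd
        rw [← hi]
        exact hσ (j i)
      · rintro ⟨σ, hσ⟩
        refine ⟨σ ∘ h, fun i => ?_⟩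
        have hmem : (rel' (j i), args (j i)) ∈ T := by
          rw [hT, Finset.mem_image]; exact ⟨i, Finset.mem_univ i, rfl⟩
        have hthis := hσ (T.equivFin ⟨(rel' (j i), args (j i)), hmem⟩)
        simp only [Equiv.symm_apply_apply] at hthis
        have harg : (args i).map (σ ∘ h) = (args (j i)).map σ := by
          rw [← (hjh i).2, List.map_map]
        rw [← (hjh i).1, harg]
        exact hthis
  -- generic: full-card image means injectivity
  have INJ : ∀ (g : ι → Rn × List ℕ),
      Fintype.card ι ≤ (Finset.univ.image g).card → Function.Injective g := by
    intro g hg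
    have h1 : (Finset.univ.image g).card = (Finset.univ : Finset ι).card :=
      le_antisymm Finset.card_image_le (by simpa [Finset.card_univ] using hg)
    rw [Finset.card_image_iff] at h1
    intro x y hxy
    exact h1 (Finset.mem_coe.mpr (Finset.mem_univ x)) (Finset.mem_coe.mpr (Finset.mem_univ y)) hxy
  -- atom injectivity
  have hA : Function.Injective (fun i => (rel' i, args i)) := by
    apply INJ
    exact CARD id id (fun i => ⟨rfl, by simp⟩)
  -- the renaming function F
  have hFex : ∀ t : Rn × List α, ∃ t' : Rn × List (α × ℕ),
      ∀ i l, t = (rel i, l) → t' = (rel' i, l.zip (args i)) := by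
    intro t
    by_cases h : ∃ i, t.1 = rel i
    · obtain ⟨i, hi⟩ := h
      refine ⟨(rel' i, t.2.zip (args i)), ?_⟩
      rintro i' l' rfl
      have : i' = i := hsjfree hi
      subst this
      rfl
    · exact ⟨(t.1, []), fun i l ht => absurd (⟨i, by rw [ht]⟩ : ∃ i, t.1 = rel i) h⟩
  choose F hF using hFex
  have hFval : ∀ i (l : List α), F (rel i, l) = (rel' i, l.zip (args i)) :=
    fun i l => hF _ i l rfl
  set P : Rn × List α → Prop := fun t => ∃ i, t.1 = rel i with hP
  -- tuples of D have the right length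
  have hgood : ∀ i (l : List α), (rel i, l) ∈ D → l.length = (args i).length := by
    intro i l h
    rw [hD _ h, hlen i]
  -- F是injective on good tuples
  have hFinj : ∀ i i' (l l' : List α), l.length = (args i).length →
      l'.length = (args i').length → F (rel i, l) = F (rel i', l') →
      (rel i, l) = ((rel i', l') : Rn × List α) := by
    intro i i' l l' h1 h2 he
    rw [hFval, hFval] at he
    have hrr : rel' i = rel' i' := congrArg Prod.fst he
    have hz : l.zip (args i) = l'.zip (args i') := congrArg Prod.snd he
    have hfst : l = l' := by
      have := congrArg (List.map Prod.fst) hz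
      rwa [List.map_fst_zip (le_of_eq h1), List.map_fst_zip (le_of_eq h2)] at this
    have hsnd : args i = args i' := by
      have := congrArg (List.map Prod.snd) hz
      rwa [List.map_snd_zip (le_of_eq h1.symm), List.map_snd_zip (le_of_eq h2.symm)]
        at this
    have : i = i' := hA (by simp [hrr, hsnd] : (fun i => (rel' i, args i)) i = _)
    subst this
    rw [hfst]
  -- forward embedding of homomorphisms
  have EMB : ∀ (S : Finset (Rn × List α)) (σ : ℕ → α),
      (∀ i, (rel i, (args i).map σ) ∈ S) →
      ∀ i, (rel' i, (args i).map (fun v => ((σ v, v) : α × ℕ))) ∈ (S.filter P).image F := by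
    intro S σ hσ i
    rw [Finset.mem_image]
    refine ⟨(rel i, (args i).map σ), Finset.mem_filter.mpr ⟨hσ i, ⟨i, rfl⟩⟩, ?_⟩
    rw [hFval]
    congr 1
    rw [show args i = (args i).map id by simp, List.map_map, List.map_map, List.zip_map']
    simp
  -- backward: homomorphism of q^sj into renamed instance yields hom of q
  have HOM : ∀ (S : Finset (Rn × List α)), S ⊆ D →
      (∃ σ' : ℕ → α × ℕ, ∀ i, (rel' i, (args i).map σ') ∈ (S.filter P).image F) →
      ∃ σ : ℕ → α, ∀ i, (rel i, (args i).map σ) ∈ S := by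
    rintro S hS ⟨σ', hσ'⟩
    have hw : ∀ i, ∃ j : ι, ∃ l : List α, (rel j, l) ∈ S ∧
        (rel' j, l.zip (args j)) = (rel' i, (args i).map σ') := by
      intro i
      obtain ⟨t, ht, hft⟩ := Finset.mem_image.mp (hσ' i)
      obtain ⟨htS, j, hj⟩ := Finset.mem_filter.mp ht
      have htt : t = (rel j, t.2) := by rw [← hj]
      refine ⟨j, t.2, by rwa [← htt], ?_⟩
      rw [← hFval j t.2, ← htt, hft]
    choose j l hmem heq using hw
    have hrel : ∀ i, rel' (j i) = rel' i := fun i => congrArg Prod.fst (heq i)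
    have hlenl : ∀ i, (l i).length = (args (j i)).length := fun i => hgood _ _ (hS (hmem i))
    have hlenji : ∀ i, (args (j i)).length = (args i).length := fun i => hlen2 _ _ (hrel i)
    set σ₀ : ℕ → α := fun v => (σ' v).1 with hσ₀
    set h : ℕ → ℕ := fun v => (σ' v).2 with hh
    have hzipd : ∀ i, (args i).map σ' = ((args i).map σ₀).zip ((args i).map h) := by
      intro i
      rw [List.zip_map']
    have hl : ∀ i, l i = (args i).map σ₀ := by
      intro i
      have := congrArg (fun x => List.map Prod.fst x.2) (heq i)
      simp only [hzipd] at this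
      rwa [List.map_fst_zip (le_of_eq (hlenl i)),
        List.map_fst_zip (by simp)] at this
    have hha : ∀ i, (args i).map h = args (j i) := by
      intro i
      have := congrArg (fun x => List.map Prod.snd x.2) (heq i)
      simp only [hzipd] at this
      have e1 : List.map Prod.snd ((l i).zip (args (j i))) = args (j i) :=
        List.map_snd_zip (le_of_eq (hlenl i).symm)
      have e2 : List.map Prod.snd (((args i).map σ₀).zip ((args i).map h)) = (args i).map h :=
        List.map_snd_zip (by simp)
      simp only [e1, e2] at this
      exact this.symm
    have hmem' : ∀ i, (rel (j i), (args i).map σ₀) ∈ S := by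
      intro i
      have := hmem i
      rwa [hl i] at this
    -- j is bijective
    have hjbij : Function.Bijective j := by
      have hinj : Function.Injective (fun i => (rel' (j i), args (j i))) :=
        INJ _ (CARD j h (fun i => ⟨hrel i, hha i⟩))
      have : Function.Injective j := fun x y hxy => hinj (by simp only [hxy])
      exact Finite.injective_iff_bijective.mp this
    -- iterates
    have hiter : ∀ n i, (args i).map (h^[n]) = args (j^[n] i) := by
      intro n
      induction n with
      | zero => simp
      | succ n ih =>
        intro i
        rw [Function.iterate_succ', Function.iterate_succ']
        simp only [Function.comp_apply]
        rw [← List.map_map, ih i, hha (j^[n] i)]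
    set π : Equiv.Perm ι := Equiv.ofBijective j hjbij with hπ
    have hcoe : ∀ n (i : ι), (π ^ n) i = j^[n] i := by
      intro n i
      rw [Equiv.Perm.coe_pow]
      rfl
    set m : ℕ := orderOf π with hm
    have hm1 : 1 ≤ m := orderOf_pos π
    have hmid : ∀ i, j^[m] i = i := by
      intro i
      rw [← hcoe, pow_orderOf_eq_one π]
      rfl
    refine ⟨σ₀ ∘ h^[m - 1], fun i => ?_⟩
    have hstep := hmem' (j^[m - 1] i)
    have h1 : j (j^[m - 1] i) = i := by
      have : j^[m] i = i := hmid i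
      rwa [show m = (m - 1) + 1 by omega, Function.iterate_succ',
        Function.comp_apply] at this
    have h2 : (args i).map (σ₀ ∘ h^[m - 1]) = (args (j^[m - 1] i)).map σ₀ := by
      rw [← hiter (m - 1) i, List.map_map]
    rw [h1] at hstep
    rwa [h2]
  -- define D'
  refine ⟨α × ℕ, (D.filter P).image F, ?_, ?_, ?_⟩
  · -- arity of D'
    intro t' ht'
    obtain ⟨t, ht, hft⟩ := Finset.mem_image.mp ht'
    obtain ⟨htD, i, hi⟩ := Finset.mem_filter.mp ht
    have htt : t = (rel i, t.2) := by rw [← hi]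
    rw [← hft, htt, hFval]
    simp only [List.length_zip]
    rw [hgood i t.2 (by rwa [← htt]), min_self, hlen' i]
  · -- D' satisfies q^sj
    obtain ⟨σ, hσ⟩ := hsat
    exact ⟨fun v => (σ v, v), EMB D σ hσ⟩
  · -- contingency equivalence
    intro k
    constructor
    · rintro ⟨Γ, hΓD, hΓk, hΓcon⟩
      refine ⟨(Γ.filter P).image F, ?_, ?_, ?_⟩
      · exact Finset.image_subset_image (Finset.filter_subset_filter _ hΓD)
      · exact le_trans Finset.card_image_le (le_trans (Finset.card_filter_le _ _) hΓk)
      · rintro ⟨σ', hσ'⟩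
        apply hΓcon
        have hsub : ∀ i, (rel' i, (args i).map σ') ∈ ((D \ Γ).filter P).image F := by
          intro i
          obtain ⟨hmem, hnin⟩ := hσ' i
          obtain ⟨t, ht, hft⟩ := Finset.mem_image.mp hmem
          obtain ⟨htD, hPt⟩ := Finset.mem_filter.mp ht
          have htΓ : t ∉ Γ := by
            intro hc
            exact hnin (Finset.mem_image.mpr ⟨t, Finset.mem_filter.mpr ⟨hc, hPt⟩, hft⟩)
          exact Finset.mem_image.mpr
            ⟨t, Finset.mem_filter.mpr ⟨Finset.mem_sdiff.mpr ⟨htD, htΓ⟩, hPt⟩, hft⟩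
        obtain ⟨σ, hσ⟩ := HOM (D \ Γ) (Finset.sdiff_subset) ⟨σ', hsub⟩
        exact ⟨σ, fun i => Finset.mem_sdiff.mp (hσ i)⟩
    · rintro ⟨Γ', hΓ'D', hΓ'k, hΓ'con⟩
      refine ⟨D.filter (fun t => P t ∧ F t ∈ Γ'), Finset.filter_subset _ _, ?_, ?_⟩
      · refine le_trans (Finset.card_le_card_of_injOn F ?_ ?_) hΓ'k
        · intro t ht
          exact (Finset.mem_filter.mp ht).2.2
        · intro t ht t' ht' hft
          simp only [Finset.coe_filter, Set.mem_setOf_eq] at ht ht'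
          obtain ⟨htD, ⟨i, hi⟩, -⟩ := ht
          obtain ⟨ht'D, ⟨i', hi'⟩, -⟩ := ht'
          have htt : t = (rel i, t.2) := by rw [← hi]
          have htt' : t' = (rel i', t'.2) := by rw [← hi']
          rw [htt, htt']
          refine hFinj i i' t.2 t'.2 ?_ ?_ ?_
          · exact hgood i t.2 (by rwa [← htt])
          · exact hgood i' t'.2 (by rwa [← htt'])
          · rw [← htt, ← htt', hft]
      · rintro ⟨σ, hσ⟩
        apply hΓ'con
        have hσS : ∀ i, (rel i, (args i).map σ) ∈
            D \ (D.filter (fun t => P t ∧ F t ∈ Γ')) := by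
          intro i
          exact Finset.mem_sdiff.mpr ⟨(hσ i).1, fun hc =>
            (hσ i).2 (by
              have := Finset.mem_filter.mp hc
              exact Finset.mem_filter.mpr ⟨(hσ i).1, this.2⟩)⟩
        refine ⟨fun v => (σ v, v), fun i => ?_⟩
        have hemb := EMB (D \ (D.filter (fun t => P t ∧ F t ∈ Γ'))) σ hσS i
        obtain ⟨t, ht, hft⟩ := Finset.mem_image.mp hemb
        obtain ⟨htS, hPt⟩ := Finset.mem_filter.mp ht
        obtain ⟨htD, htn⟩ := Finset.mem_sdiff.mp htS
        constructor
        · exact Finset.mem_image.mpr ⟨t, Finset.mem_filter.mpr ⟨htD, hPt⟩, hft⟩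
        · intro hc
          rw [← hft] at hc
          exact htn (Finset.mem_filter.mpr ⟨htD, hPt, hc⟩)
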